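/- Let γ ⊂ ℝ^d be locally finite and satisfy the density condition with constant a > 0 for interaction radius r > 0, and let {V_{xy}} be an admissible family with interaction radius r and Lipschitz constant C > 0 which additionally satisfies |V_{xy}(0,0)| ≤ C for all x, y ∈ γ. Fix 0 < α_* < α^*. Then there exists a constant L > 0 (depending only on γ, C, a, r, d, α_*, α^*) such that for all α_* ≤ α < β ≤ α^* and every q : γ → ℝ with ‖q‖_α < ∞, the family (|V̄_x(q)|² e^{−β|x|})_{x∈γ} is summable and ∑_{x∈γ} |V̄_x(q)|² e^{−β|x|} ≤ L² (β − α)^{−1} (1 + ‖q‖_α)². -/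

import Mathlib

open scoped BigOperators

noncomputable section

/-- The finite set `γ_{x,r} = {y ∈ γ : |x - y| < r}` of points of `γ` within
distance `r` of `x`, given local finiteness of `γ`. -/
def nbhd {d : ℕ} (γ : Set (EuclideanSpace ℝ (Fin d)))
    (hLF : ∀ (x : EuclideanSpace ℝ (Fin d)) (R : ℝ), {y ∈ γ | dist x y < R}.Finite)
    (r : ℝ) (x : EuclideanSpace ℝ (Fin d)) : Finset (EuclideanSpace ℝ (Fin d)) :=
  (hLF x r).toFinset

/-- `n_{x,r}(γ)`, the number of points of `γ` within distance `r` of `x`. -/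
def npts {d : ℕ} (γ : Set (EuclideanSpace ℝ (Fin d)))
    (hLF : ∀ (x : EuclideanSpace ℝ (Fin d)) (R : ℝ), {y ∈ γ | dist x y < R}.Finite)
    (r : ℝ) (x : EuclideanSpace ℝ (Fin d)) : ℕ :=
  (nbhd γ hLF r x).card

/-- `V̄_x(q) = ∑_{y ∈ γ_{x,r}} V_{xy}(q_x, q_y)`. -/
def Vbar {d : ℕ} (γ : Set (EuclideanSpace ℝ (Fin d)))
    (hLF : ∀ (x : EuclideanSpace ℝ (Fin d)) (R : ℝ), {y ∈ γ | dist x y < R}.Finite)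
    (V : EuclideanSpace ℝ (Fin d) → EuclideanSpace ℝ (Fin d) → ℝ → ℝ → ℝ)
    (r : ℝ) (q : EuclideanSpace ℝ (Fin d) → ℝ) (x : EuclideanSpace ℝ (Fin d)) : ℝ :=
  ∑ y ∈ nbhd γ hLF r x, V x y (q x) (q y)

section Aux

open Metric MeasureTheory Set ENNReal

variable {d : ℕ} {γ : Set (EuclideanSpace ℝ (Fin d))}
  {hLF : ∀ (x : EuclideanSpace ℝ (Fin d)) (R : ℝ), {y ∈ γ | dist x y < R}.Finite}

lemma mem_nbhd {r : ℝ} {x y : EuclideanSpace ℝ (Fin d)} :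
    y ∈ nbhd γ hLF r x ↔ y ∈ γ ∧ dist x y < r := by
  simp [nbhd, Set.Finite.mem_toFinset]

/-- The finset `γ_{x,r}` viewed inside the subtype `γ`. -/
def nbhdSub (γ : Set (EuclideanSpace ℝ (Fin d)))
    (hLF : ∀ (x : EuclideanSpace ℝ (Fin d)) (R : ℝ), {y ∈ γ | dist x y < R}.Finite)
    (r : ℝ) (x : EuclideanSpace ℝ (Fin d)) : Finset γ :=
  (nbhd γ hLF r x).attach.map
    ⟨fun y => ⟨y.1, (mem_nbhd.1 y.2).1⟩, fun y z h => Subtype.ext (by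
      simpa using congrArg Subtype.val h)⟩

lemma mem_nbhdSub {r : ℝ} {x : EuclideanSpace ℝ (Fin d)} {y : γ}
    (h : dist x (y : EuclideanSpace ℝ (Fin d)) < r) : y ∈ nbhdSub γ hLF r x :=
  Finset.mem_map.2 ⟨⟨↑y, mem_nbhd.2 ⟨y.2, h⟩⟩, Finset.mem_attach _ _, rfl⟩

lemma card_nbhdSub {r : ℝ} {x : EuclideanSpace ℝ (Fin d)} :
    (nbhdSub γ hLF r x).card = npts γ hLF r x := by
  rw [nbhdSub, Finset.card_map, Finset.card_attach]; rfl

/-- A tsum over the subtype `γ` of a function supported on `γ_{x,r}` is a finite sum. -/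
lemma tsum_ite_eq_sum (r : ℝ) (x : EuclideanSpace ℝ (Fin d))
    (g : EuclideanSpace ℝ (Fin d) → ℝ≥0∞) :
    ∑' (y : γ), (if dist x (y : EuclideanSpace ℝ (Fin d)) < r then g ↑y else 0)
      = ∑ y ∈ nbhd γ hLF r x, g y := by
  classical
  rw [tsum_eq_sum (s := nbhdSub γ hLF (r := r) x) (fun y hy => if_neg (fun hlt => hy (mem_nbhdSub hlt)))]
  rw [nbhdSub, Finset.sum_map, ← Finset.sum_attach (nbhd γ hLF (r := r) x) (fun z => g z)]
  exact Finset.sum_congr rfl (fun y _ => if_pos (mem_nbhd.1 y.2).2)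

/-- A tsum over `γ` of a function supported on `γ_{z,r}` and bounded by `M` is at most
`n_{z,r} * M`. -/
lemma tsum_le_card_mul (r : ℝ) (z : EuclideanSpace ℝ (Fin d)) (f : γ → ℝ≥0∞) (M : ℝ≥0∞)
    (h0 : ∀ y : γ, r ≤ dist z (y : EuclideanSpace ℝ (Fin d)) → f y = 0)
    (hM : ∀ y, f y ≤ M) :
    ∑' y, f y ≤ (npts γ hLF r z : ℝ≥0∞) * M := by
  classical
  rw [tsum_eq_sum (s := nbhdSub γ hLF (r := r) z) (fun y hy =>
    h0 y (le_of_not_gt (fun hlt => hy (mem_nbhdSub hlt))))]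
  calc ∑ y ∈ nbhdSub γ hLF (r := r) z, f y
      ≤ (nbhdSub γ hLF (r := r) z).card • M :=
        Finset.sum_le_card_nsmul _ _ M (fun y _ => hM y)
    _ = (npts γ hLF r z : ℝ≥0∞) * M := by rw [card_nbhdSub, nsmul_eq_mul]

lemma one_add_mul_exp_le {ε t : ℝ} (hε : 0 < ε) (ht : 0 ≤ t) :
    (1 + t) * Real.exp (-(ε * t)) ≤ 1 + ε⁻¹ := by
  have hu : 0 < Real.exp (ε * t) := Real.exp_pos _
  have h1 : Real.exp (-(ε * t)) ≤ 1 := by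
    rw [Real.exp_le_one_iff]; nlinarith
  have h2 : t * Real.exp (-(ε * t)) ≤ ε⁻¹ := by
    rw [Real.exp_neg, ← div_eq_mul_inv, div_le_iff₀ hu]
    have h3 : ε * t + 1 ≤ Real.exp (ε * t) := Real.add_one_le_exp _
    have h4 : (0:ℝ) < ε⁻¹ := by positivity
    calc t = ε⁻¹ * (ε * t) := by field_simp
      _ ≤ ε⁻¹ * Real.exp (ε * t) := by nlinarith
  nlinarith

lemma pow_le_factorial_mul_exp {x : ℝ} (hx : 0 ≤ x) (n : ℕ) :
    x ^ n ≤ (n.factorial : ℝ) * Real.exp x := by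
  have h := Real.sum_le_exp_of_nonneg hx (n + 1)
  have h2 : x ^ n / (n.factorial : ℝ) ≤ ∑ i ∈ Finset.range (n + 1), x ^ i / (i.factorial : ℝ) :=
    Finset.single_le_sum (f := fun i => x ^ i / (i.factorial : ℝ))
      (fun i _ => by positivity) (Finset.self_mem_range_succ n)
  have h3 := h2.trans h
  have h4 : (0:ℝ) < (n.factorial : ℝ) := by positivity
  rw [div_le_iff₀ h4] at h3
  linarith

end Aux

section Weight

open Metric MeasureTheory Set ENNReal

variable {d : ℕ} {γ : Set (EuclideanSpace ℝ (Fin d))}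
  {hLF : ∀ (x : EuclideanSpace ℝ (Fin d)) (R : ℝ), {y ∈ γ | dist x y < R}.Finite}

lemma weight_lt_top (hcount : γ.Countable) {r a αs : ℝ} (hr : 0 < r) (ha : 0 < a)
    (hden : ∀ x : EuclideanSpace ℝ (Fin d),
      (npts γ hLF r x : ℝ) ≤ a * Real.sqrt (1 + ‖x‖)) (h0 : 0 < αs) :
    ∑' (x : γ), ENNReal.ofReal
      ((1 + ‖(x : EuclideanSpace ℝ (Fin d))‖)
        * Real.exp (-(αs * ‖(x : EuclideanSpace ℝ (Fin d))‖))) < ⊤ := by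
  classical
  haveI : Countable γ := hcount.to_subtype
  set G : EuclideanSpace ℝ (Fin d) → ℝ≥0∞ := fun z =>
    ENNReal.ofReal (Real.exp (αs * r) * ((1 + r + ‖z‖) * Real.exp (-(αs * ‖z‖)))) with hGdef
  have hGmeas : Measurable G := by
    apply Measurable.ennreal_ofReal
    fun_prop
  set g : γ → ℝ≥0∞ := fun x =>
    ENNReal.ofReal ((1 + ‖(x : EuclideanSpace ℝ (Fin d))‖) * Real.exp (-(αs * ‖(x : EuclideanSpace ℝ (Fin d))‖))) with hgdef
  set v : ℝ≥0∞ := volume (ball (0 : EuclideanSpace ℝ (Fin d)) (r / 2)) with hvdef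
  have hv0 : v ≠ 0 := (measure_ball_pos volume (0 : EuclideanSpace ℝ (Fin d)) (by linarith)).ne'
  have hvtop : v ≠ ⊤ := measure_ball_lt_top.ne
  -- Step 1: pointwise comparison with a set integral
  have key : ∀ x : γ, g x * v ≤ ∫⁻ z in ball (x : EuclideanSpace ℝ (Fin d)) (r / 2), G z := by
    intro x
    have hball : volume (ball (x : EuclideanSpace ℝ (Fin d)) (r / 2)) = v :=
      Measure.addHaar_ball_center volume _ _
    have h1 : g x * v = ∫⁻ _ in ball (x : EuclideanSpace ℝ (Fin d)) (r / 2), g x := by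
      rw [setLIntegral_const, hball]
    rw [h1]
    refine setLIntegral_mono hGmeas (fun z hz => ?_)
    have hdz : dist z (x : EuclideanSpace ℝ (Fin d)) < r / 2 := mem_ball.1 hz
    have hn1 : ‖(x : EuclideanSpace ℝ (Fin d))‖ ≤ ‖z‖ + r := by
      have := abs_norm_sub_norm_le (x : EuclideanSpace ℝ (Fin d)) z
      rw [← dist_eq_norm, dist_comm] at this
      have h2 := abs_le.1 this
      linarith [h2.2]
    have hn2 : ‖z‖ - r ≤ ‖(x : EuclideanSpace ℝ (Fin d))‖ := by
      have := abs_norm_sub_norm_le z (x : EuclideanSpace ℝ (Fin d))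
      rw [← dist_eq_norm] at this
      have h2 := abs_le.1 this
      linarith [h2.2]
    apply ENNReal.ofReal_le_ofReal
    have e1 : Real.exp (-(αs * ‖(x : EuclideanSpace ℝ (Fin d))‖)) ≤ Real.exp (αs * r) * Real.exp (-(αs * ‖z‖)) := by
      rw [← Real.exp_add]
      apply Real.exp_le_exp.2
      nlinarith
    have e2 : 1 + ‖(x : EuclideanSpace ℝ (Fin d))‖ ≤ 1 + r + ‖z‖ := by linarith
    calc (1 + ‖(x : EuclideanSpace ℝ (Fin d))‖) * Real.exp (-(αs * ‖(x : EuclideanSpace ℝ (Fin d))‖))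
        ≤ (1 + r + ‖z‖) * (Real.exp (αs * r) * Real.exp (-(αs * ‖z‖))) :=
          mul_le_mul e2 e1 (Real.exp_nonneg _) (by positivity)
      _ = Real.exp (αs * r) * ((1 + r + ‖z‖) * Real.exp (-(αs * ‖z‖))) := by ring
  -- Step 2: sum the inequalities and swap sum and integral
  have sum_key : (∑' x : γ, g x) * v
      ≤ ∫⁻ z : EuclideanSpace ℝ (Fin d), ENNReal.ofReal (a * Real.sqrt (1 + ‖z‖)) * G z := by
    rw [← ENNReal.tsum_mul_right]
    calc ∑' x : γ, g x * v
        ≤ ∑' x : γ, ∫⁻ z in ball (x : EuclideanSpace ℝ (Fin d)) (r / 2), G z := ENNReal.tsum_le_tsum key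
      _ = ∑' x : γ, ∫⁻ z : EuclideanSpace ℝ (Fin d), (ball (x : EuclideanSpace ℝ (Fin d)) (r / 2)).indicator G z := by
          refine tsum_congr (fun x => ?_)
          rw [lintegral_indicator measurableSet_ball]
      _ = ∫⁻ z : EuclideanSpace ℝ (Fin d), ∑' x : γ, (ball (x : EuclideanSpace ℝ (Fin d)) (r / 2)).indicator G z :=
          (lintegral_tsum (fun x => (hGmeas.indicator measurableSet_ball).aemeasurable)).symm
      _ ≤ ∫⁻ z : EuclideanSpace ℝ (Fin d), ENNReal.ofReal (a * Real.sqrt (1 + ‖z‖)) * G z := by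
          refine lintegral_mono (fun z => ?_)
          have hb := tsum_le_card_mul (γ := γ) (hLF := hLF) r z
            (fun x : γ => (ball (x : EuclideanSpace ℝ (Fin d)) (r / 2)).indicator G z) (G z)
            (fun x hx => ?_) (fun x => ?_)
          · refine le_trans hb ?_
            apply mul_le_mul_left
            rw [← ENNReal.ofReal_natCast]
            exact ENNReal.ofReal_le_ofReal (hden z)
          · refine Set.indicator_of_notMem (fun hz => ?_) G
            rw [mem_ball] at hz
            linarith
          · exact Set.indicator_le_self' (fun _ _ => zero_le) z
  -- Step 3: finiteness of the integral
  have hI : (∫⁻ z : EuclideanSpace ℝ (Fin d), ENNReal.ofReal (a * Real.sqrt (1 + ‖z‖)) * G z) < ⊤ := by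
    set K : ℝ := a * Real.exp (αs * r) * (1 + r)
      * (((d + 3).factorial : ℝ) * Real.exp αs / αs ^ (d + 3)) with hKdef
    have hpt : ∀ z : EuclideanSpace ℝ (Fin d), ENNReal.ofReal (a * Real.sqrt (1 + ‖z‖)) * G z
        ≤ ENNReal.ofReal K * ENNReal.ofReal ((1 + ‖z‖) ^ (-((d : ℝ) + 1))) := by
      intro z
      set t := ‖z‖ with htdef
      have ht : 0 ≤ t := norm_nonneg _
      rw [hGdef, ← ENNReal.ofReal_mul (by positivity), ← ENNReal.ofReal_mul (by positivity)]
      apply ENNReal.ofReal_le_ofReal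
      have hrpow : ((1 : ℝ) + t) ^ (-((d : ℝ) + 1)) = ((1 + t) ^ (d + 1))⁻¹ := by
        rw [show -((d : ℝ) + 1) = -(((d + 1 : ℕ) : ℝ)) by push_cast; ring,
          Real.rpow_neg (by positivity), Real.rpow_natCast]
      rw [hrpow, ← div_eq_mul_inv, le_div_iff₀ (by positivity)]
      have hstep : (1 + t) ^ (d + 3) * Real.exp (-(αs * t))
          ≤ ((d + 3).factorial : ℝ) * Real.exp αs / αs ^ (d + 3) := by
        have h1 : (αs * (1 + t)) ^ (d + 3)
            ≤ ((d + 3).factorial : ℝ) * Real.exp (αs * (1 + t)) :=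
          pow_le_factorial_mul_exp (by positivity) _
        rw [mul_pow, show αs * (1 + t) = αs + αs * t by ring, Real.exp_add] at h1
        rw [le_div_iff₀ (by positivity)]
        have h2 := mul_le_mul_of_nonneg_right h1 (Real.exp_nonneg (-(αs * t)))
        calc (1 + t) ^ (d + 3) * Real.exp (-(αs * t)) * αs ^ (d + 3)
            = αs ^ (d + 3) * (1 + t) ^ (d + 3) * Real.exp (-(αs * t)) := by ring
          _ ≤ ((d + 3).factorial : ℝ) * (Real.exp αs * Real.exp (αs * t))
              * Real.exp (-(αs * t)) := h2
          _ = ((d + 3).factorial : ℝ) * Real.exp αs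
              * (Real.exp (αs * t) * Real.exp (-(αs * t))) := by ring
          _ = ((d + 3).factorial : ℝ) * Real.exp αs := by
              rw [← Real.exp_add, add_neg_cancel, Real.exp_zero, mul_one]
      have hsq : Real.sqrt (1 + t) ≤ 1 + t := by
        rw [Real.sqrt_le_left (by positivity)]
        nlinarith
      have hc : 1 + r + t ≤ (1 + r) * (1 + t) := by nlinarith
      calc a * Real.sqrt (1 + t) * (Real.exp (αs * r) * ((1 + r + t) * Real.exp (-(αs * t))))
            * (1 + t) ^ (d + 1)
          ≤ a * (1 + t) * (Real.exp (αs * r) * (((1 + r) * (1 + t)) * Real.exp (-(αs * t))))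
            * (1 + t) ^ (d + 1) := by gcongr
        _ = (a * Real.exp (αs * r) * (1 + r)) * ((1 + t) ^ (d + 3) * Real.exp (-(αs * t))) := by
            ring
        _ ≤ (a * Real.exp (αs * r) * (1 + r))
            * (((d + 3).factorial : ℝ) * Real.exp αs / αs ^ (d + 3)) := by
            have hnn : (0:ℝ) ≤ a * Real.exp (αs * r) * (1 + r) := by positivity
            exact mul_le_mul_of_nonneg_left hstep hnn
        _ = K := by rw [hKdef]
    calc (∫⁻ z : EuclideanSpace ℝ (Fin d), ENNReal.ofReal (a * Real.sqrt (1 + ‖z‖)) * G z)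
        ≤ ∫⁻ z : EuclideanSpace ℝ (Fin d), ENNReal.ofReal K * ENNReal.ofReal ((1 + ‖z‖) ^ (-((d : ℝ) + 1))) :=
          lintegral_mono hpt
      _ = ENNReal.ofReal K * ∫⁻ z : EuclideanSpace ℝ (Fin d), ENNReal.ofReal ((1 + ‖z‖) ^ (-((d : ℝ) + 1))) :=
          lintegral_const_mul' _ _ ENNReal.ofReal_ne_top
      _ < ⊤ := ENNReal.mul_lt_top ENNReal.ofReal_lt_top
          (finite_integral_one_add_norm (by simp [finrank_euclideanSpace]))
  -- Conclude
  have hlt : (∑' x : γ, g x) * v < ⊤ := lt_of_le_of_lt sum_key hI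
  by_contra htop
  push_neg at htop
  have h1 : (∑' x : γ, g x) = ⊤ := top_le_iff.1 htop
  rw [h1, ENNReal.top_mul hv0] at hlt
  exact lt_irrefl _ hlt

end Weight

set_option maxHeartbeats 1000000 in
open Metric MeasureTheory Set ENNReal in
theorem statement0 {d : ℕ} (hd : 1 ≤ d) (γ : Set (EuclideanSpace ℝ (Fin d)))
    (hcount : γ.Countable)
    (hLF : ∀ (x : EuclideanSpace ℝ (Fin d)) (R : ℝ), {y ∈ γ | dist x y < R}.Finite)
    (r a : ℝ) (hr : 0 < r) (ha : 0 < a)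
    (hden : ∀ x : EuclideanSpace ℝ (Fin d),
      (npts γ hLF r x : ℝ) ≤ a * Real.sqrt (1 + ‖x‖))
    (V : EuclideanSpace ℝ (Fin d) → EuclideanSpace ℝ (Fin d) → ℝ → ℝ → ℝ)
    (C : ℝ) (hC : 0 < C)
    (hrange : ∀ x ∈ γ, ∀ y ∈ γ, r ≤ dist x y → ∀ s t : ℝ, V x y s t = 0)
    (hlip : ∀ x ∈ γ, ∀ y ∈ γ, ∀ q1 q2 q1' q2' : ℝ,
      |V x y q1 q2 - V x y q1' q2'| ≤ C * (|q1 - q1'| + |q2 - q2'|))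
    (hV0 : ∀ x ∈ γ, ∀ y ∈ γ, |V x y 0 0| ≤ C)
    (αs αS : ℝ) (h0 : 0 < αs) (hss : αs < αS) :
    ∃ L > (0 : ℝ), ∀ α β : ℝ, αs ≤ α → α < β → β ≤ αS →
      ∀ q : EuclideanSpace ℝ (Fin d) → ℝ,
      Summable (fun y : γ => (q y) ^ 2 * Real.exp (-α * ‖(y : EuclideanSpace ℝ (Fin d))‖)) →
      Summable (fun x : γ =>
          (Vbar γ hLF V r q x) ^ 2 * Real.exp (-β * ‖(x : EuclideanSpace ℝ (Fin d))‖)) ∧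
      ∑' x : γ, (Vbar γ hLF V r q x) ^ 2 * Real.exp (-β * ‖(x : EuclideanSpace ℝ (Fin d))‖)
        ≤ L ^ 2 * (β - α)⁻¹ *
          (1 + Real.sqrt (∑' y : γ,
            (q y) ^ 2 * Real.exp (-α * ‖(y : EuclideanSpace ℝ (Fin d))‖))) ^ 2 := by
  classical
  haveI : Countable γ := hcount.to_subtype
  have hW := weight_lt_top (hLF := hLF) hcount hr ha hden h0
  set W : ℝ≥0∞ := ∑' (x : γ), ENNReal.ofReal
      ((1 + ‖(x : EuclideanSpace ℝ (Fin d))‖)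
        * Real.exp (-(αs * ‖(x : EuclideanSpace ℝ (Fin d))‖))) with hWdef
  set Wr : ℝ := W.toReal with hWrdef
  have hWr0 : 0 ≤ Wr := ENNReal.toReal_nonneg
  have hWof : ENNReal.ofReal Wr = W := ENNReal.ofReal_toReal hW.ne
  have hαS : 0 < αS := lt_trans h0 hss
  set K1 : ℝ := a ^ 2 * Wr * αS with hK1def
  set K2 : ℝ := a ^ 2 * (1 + αS) with hK2def
  set K3 : ℝ := a ^ 2 * Real.sqrt (1 + r) * Real.exp (αS * r) * (1 + αS) with hK3def
  have hK1 : 0 ≤ K1 := by rw [hK1def]; positivity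
  have hK2 : 0 < K2 := by rw [hK2def]; positivity
  have hK3 : 0 < K3 := by rw [hK3def]; positivity
  have hKpos : 0 < 3 * C ^ 2 * (K1 + K2 + K3) := by positivity
  set L : ℝ := Real.sqrt (3 * C ^ 2 * (K1 + K2 + K3)) with hLdef
  have hL : 0 < L := Real.sqrt_pos.2 hKpos
  have hLsq : L ^ 2 = 3 * C ^ 2 * (K1 + K2 + K3) := Real.sq_sqrt hKpos.le
  refine ⟨L, hL, fun α β hα hαβ hβ q hq => ?_⟩
  set ε : ℝ := β - α with hεdef
  have hε : 0 < ε := by rw [hεdef]; linarith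
  have hα0 : 0 < α := lt_of_lt_of_le h0 hα
  have hβ0 : 0 < β := lt_trans hα0 hαβ
  have hεS : ε ≤ αS := by rw [hεdef]; linarith
  have hβS : β ≤ αS := hβ
  have hαsβ : αs ≤ β := le_of_lt (lt_of_le_of_lt hα hαβ)
  have hone_le : (1 : ℝ) ≤ αS * ε⁻¹ := by
    rw [← div_eq_mul_inv, le_div_iff₀ hε]; linarith
  have hMε : ∀ t : ℝ, 0 ≤ t → (1 + t) * Real.exp (-(ε * t)) ≤ (1 + αS) * ε⁻¹ := by
    intro t ht
    have h1 := one_add_mul_exp_le hε ht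
    calc (1 + t) * Real.exp (-(ε * t)) ≤ 1 + ε⁻¹ := h1
      _ ≤ αS * ε⁻¹ + ε⁻¹ := by linarith
      _ = (1 + αS) * ε⁻¹ := by ring
  set Q : ℝ := ∑' y : γ,
      (q y) ^ 2 * Real.exp (-α * ‖(y : EuclideanSpace ℝ (Fin d))‖) with hQdef
  have hq_nonneg : ∀ y : γ,
      0 ≤ (q y) ^ 2 * Real.exp (-α * ‖(y : EuclideanSpace ℝ (Fin d))‖) :=
    fun y => by positivity
  have hQ0 : 0 ≤ Q := by rw [hQdef]; exact tsum_nonneg hq_nonneg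
  have hQof : ∑' (y : γ), ENNReal.ofReal
      ((q y) ^ 2 * Real.exp (-α * ‖(y : EuclideanSpace ℝ (Fin d))‖)) = ENNReal.ofReal Q := by
    rw [hQdef]
    exact (ENNReal.ofReal_tsum_of_nonneg hq_nonneg hq).symm
  set f : γ → ℝ := fun x =>
    (Vbar γ hLF V r q x) ^ 2 * Real.exp (-β * ‖(x : EuclideanSpace ℝ (Fin d))‖) with hfdef
  have hf_nonneg : ∀ x : γ, 0 ≤ f x := fun x => by rw [hfdef]; positivity
  set nn : γ → ℝ := fun x => (npts γ hLF r (x : EuclideanSpace ℝ (Fin d)) : ℝ) with hnndef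
  have hnn0 : ∀ x : γ, 0 ≤ nn x := fun x => Nat.cast_nonneg _
  set ex : γ → ℝ := fun x => Real.exp (-β * ‖(x : EuclideanSpace ℝ (Fin d))‖) with hexdef
  have hex0 : ∀ x : γ, 0 < ex x := fun x => Real.exp_pos _
  set h1f : γ → ℝ≥0∞ := fun x => ENNReal.ofReal (nn x ^ 2 * ex x) with hh1fdef
  set h2f : γ → ℝ≥0∞ := fun x => ENNReal.ofReal (nn x ^ 2 * (q x) ^ 2 * ex x) with hh2fdef
  set h3f : γ → ℝ≥0∞ := fun x => ENNReal.ofReal (nn x * ex x)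
      * ∑ y ∈ nbhd γ hLF r (x : EuclideanSpace ℝ (Fin d)), ENNReal.ofReal ((q y) ^ 2)
    with hh3fdef
  have hnsq : ∀ x : γ, nn x ^ 2 ≤ a ^ 2 * (1 + ‖(x : EuclideanSpace ℝ (Fin d))‖) := by
    intro x
    have h := hden (x : EuclideanSpace ℝ (Fin d))
    have h2 : nn x ^ 2 ≤ (a * Real.sqrt (1 + ‖(x : EuclideanSpace ℝ (Fin d))‖)) ^ 2 :=
      pow_le_pow_left₀ (hnn0 x) h 2
    rwa [mul_pow, Real.sq_sqrt (by positivity)] at h2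
  -- pointwise bound
  have hpt : ∀ x : γ, ENNReal.ofReal (f x)
      ≤ ENNReal.ofReal (3 * C ^ 2) * (h1f x + h2f x + h3f x) := by
    intro x
    set S : ℝ := ∑ y ∈ nbhd γ hLF r (x : EuclideanSpace ℝ (Fin d)), (q y) ^ 2 with hSdef
    have hS0 : 0 ≤ S := Finset.sum_nonneg (fun y _ => sq_nonneg _)
    have hVy : ∀ y ∈ nbhd γ hLF r (x : EuclideanSpace ℝ (Fin d)),
        (V (x : EuclideanSpace ℝ (Fin d)) y (q x) (q y)) ^ 2
          ≤ 3 * C ^ 2 * (1 + (q x) ^ 2 + (q y) ^ 2) := by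
      intro y hy
      obtain ⟨hyγ, _⟩ := mem_nbhd.1 hy
      have h1 := hlip (x : EuclideanSpace ℝ (Fin d)) x.2 y hyγ (q x) (q y) 0 0
      have h2 := hV0 (x : EuclideanSpace ℝ (Fin d)) x.2 y hyγ
      rw [sub_zero, sub_zero] at h1
      have h3 : |V (x : EuclideanSpace ℝ (Fin d)) y (q x) (q y)|
          ≤ |V (x : EuclideanSpace ℝ (Fin d)) y (q x) (q y)
              - V (x : EuclideanSpace ℝ (Fin d)) y 0 0|
            + |V (x : EuclideanSpace ℝ (Fin d)) y 0 0| := by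
        have h4 := abs_add_le (V (x : EuclideanSpace ℝ (Fin d)) y (q x) (q y)
          - V (x : EuclideanSpace ℝ (Fin d)) y 0 0) (V (x : EuclideanSpace ℝ (Fin d)) y 0 0)
        simpa using h4
      have habs : |V (x : EuclideanSpace ℝ (Fin d)) y (q x) (q y)|
          ≤ C * (1 + |q x| + |q y|) := by
        calc |V (x : EuclideanSpace ℝ (Fin d)) y (q x) (q y)|
            ≤ C * (|q x| + |q y|) + C := by
              refine le_trans h3 ?_
              linarith
          _ = C * (1 + |q x| + |q y|) := by ring
      have hsq : (V (x : EuclideanSpace ℝ (Fin d)) y (q x) (q y)) ^ 2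
          ≤ (C * (1 + |q x| + |q y|)) ^ 2 := by
        rw [← sq_abs]
        exact pow_le_pow_left₀ (abs_nonneg _) habs 2
      refine le_trans hsq ?_
      have key : (1 + |q (x : EuclideanSpace ℝ (Fin d))| + |q y|) ^ 2
          ≤ 3 * (1 + |q (x : EuclideanSpace ℝ (Fin d))| ^ 2 + |q y| ^ 2) := by
        nlinarith [sq_nonneg (1 - |q (x : EuclideanSpace ℝ (Fin d))|), sq_nonneg (1 - |q y|),
          sq_nonneg (|q (x : EuclideanSpace ℝ (Fin d))| - |q y|)]
      calc (C * (1 + |q (x : EuclideanSpace ℝ (Fin d))| + |q y|)) ^ 2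
          = C ^ 2 * (1 + |q (x : EuclideanSpace ℝ (Fin d))| + |q y|) ^ 2 := by ring
        _ ≤ C ^ 2 * (3 * (1 + |q (x : EuclideanSpace ℝ (Fin d))| ^ 2 + |q y| ^ 2)) :=
            mul_le_mul_of_nonneg_left key (sq_nonneg C)
        _ = 3 * C ^ 2 * (1 + |q (x : EuclideanSpace ℝ (Fin d))| ^ 2 + |q y| ^ 2) := by ring
        _ = 3 * C ^ 2 * (1 + (q x) ^ 2 + (q y) ^ 2) := by rw [sq_abs, sq_abs]
    have hCS : (Vbar γ hLF V r q (x : EuclideanSpace ℝ (Fin d))) ^ 2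
        ≤ nn x * ∑ y ∈ nbhd γ hLF r (x : EuclideanSpace ℝ (Fin d)),
            (V (x : EuclideanSpace ℝ (Fin d)) y (q x) (q y)) ^ 2 := by
      have h := sq_sum_le_card_mul_sum_sq
        (s := nbhd γ hLF r (x : EuclideanSpace ℝ (Fin d)))
        (f := fun y => V (x : EuclideanSpace ℝ (Fin d)) y (q x) (q y))
      simpa [Vbar, hnndef, npts] using h
    have hsum2 : ∑ y ∈ nbhd γ hLF r (x : EuclideanSpace ℝ (Fin d)),
        (V (x : EuclideanSpace ℝ (Fin d)) y (q x) (q y)) ^ 2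
          ≤ nn x * (3 * C ^ 2 * (1 + (q x) ^ 2)) + 3 * C ^ 2 * S := by
      calc ∑ y ∈ nbhd γ hLF r (x : EuclideanSpace ℝ (Fin d)),
          (V (x : EuclideanSpace ℝ (Fin d)) y (q x) (q y)) ^ 2
          ≤ ∑ y ∈ nbhd γ hLF r (x : EuclideanSpace ℝ (Fin d)),
              (3 * C ^ 2 * (1 + (q x) ^ 2) + 3 * C ^ 2 * (q y) ^ 2) :=
            Finset.sum_le_sum (fun y hy => le_trans (hVy y hy) (le_of_eq (by ring)))
        _ = nn x * (3 * C ^ 2 * (1 + (q x) ^ 2)) + 3 * C ^ 2 * S := by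
            rw [Finset.sum_add_distrib, Finset.sum_const, ← Finset.mul_sum, hSdef,
              nsmul_eq_mul, hnndef]
            rfl
    have hfx : f x ≤ 3 * C ^ 2 * (nn x ^ 2 * ex x + nn x ^ 2 * (q x) ^ 2 * ex x
        + nn x * ex x * S) := by
      have h5 : (Vbar γ hLF V r q (x : EuclideanSpace ℝ (Fin d))) ^ 2
          ≤ nn x * (nn x * (3 * C ^ 2 * (1 + (q x) ^ 2)) + 3 * C ^ 2 * S) :=
        le_trans hCS (mul_le_mul_of_nonneg_left hsum2 (hnn0 x))
      have h6 : f x = (Vbar γ hLF V r q (x : EuclideanSpace ℝ (Fin d))) ^ 2 * ex x := rfl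
      rw [h6]
      calc (Vbar γ hLF V r q (x : EuclideanSpace ℝ (Fin d))) ^ 2 * ex x
          ≤ (nn x * (nn x * (3 * C ^ 2 * (1 + (q x) ^ 2)) + 3 * C ^ 2 * S)) * ex x :=
            mul_le_mul_of_nonneg_right h5 (hex0 x).le
        _ = 3 * C ^ 2 * (nn x ^ 2 * ex x + nn x ^ 2 * (q x) ^ 2 * ex x
            + nn x * ex x * S) := by ring
    calc ENNReal.ofReal (f x)
        ≤ ENNReal.ofReal (3 * C ^ 2 * (nn x ^ 2 * ex x + nn x ^ 2 * (q x) ^ 2 * ex x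
            + nn x * ex x * S)) := ENNReal.ofReal_le_ofReal hfx
      _ = ENNReal.ofReal (3 * C ^ 2) * ENNReal.ofReal (nn x ^ 2 * ex x
            + nn x ^ 2 * (q x) ^ 2 * ex x + nn x * ex x * S) := by
          rw [ENNReal.ofReal_mul (by positivity)]
      _ ≤ ENNReal.ofReal (3 * C ^ 2) * (ENNReal.ofReal (nn x ^ 2 * ex x
            + nn x ^ 2 * (q x) ^ 2 * ex x) + ENNReal.ofReal (nn x * ex x * S)) :=
          mul_le_mul_right ENNReal.ofReal_add_le _
      _ ≤ ENNReal.ofReal (3 * C ^ 2) * ((ENNReal.ofReal (nn x ^ 2 * ex x)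
            + ENNReal.ofReal (nn x ^ 2 * (q x) ^ 2 * ex x))
            + ENNReal.ofReal (nn x * ex x * S)) :=
          mul_le_mul_right (add_le_add_left ENNReal.ofReal_add_le _) _
      _ = ENNReal.ofReal (3 * C ^ 2) * (h1f x + h2f x + h3f x) := by
          rw [hh1fdef, hh2fdef, hh3fdef, hSdef]
          congr 2
          rw [ENNReal.ofReal_mul (by positivity),
            ENNReal.ofReal_sum_of_nonneg (fun y _ => sq_nonneg (q y))]
  -- summing up
  have hsum_total : ∑' x : γ, ENNReal.ofReal (f x)
      ≤ ENNReal.ofReal (3 * C ^ 2)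
        * ((∑' x : γ, h1f x) + (∑' x : γ, h2f x) + (∑' x : γ, h3f x)) := by
    calc ∑' x : γ, ENNReal.ofReal (f x)
        ≤ ∑' x : γ, ENNReal.ofReal (3 * C ^ 2) * (h1f x + h2f x + h3f x) :=
          ENNReal.tsum_le_tsum hpt
      _ = ENNReal.ofReal (3 * C ^ 2) * ∑' x : γ, (h1f x + h2f x + h3f x) :=
          ENNReal.tsum_mul_left
      _ = ENNReal.ofReal (3 * C ^ 2)
          * ((∑' x : γ, h1f x) + (∑' x : γ, h2f x) + (∑' x : γ, h3f x)) := by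
          rw [ENNReal.tsum_add, ENNReal.tsum_add]
  -- bound for the first sum
  have hS1 : ∑' x : γ, h1f x ≤ ENNReal.ofReal (a ^ 2) * W := by
    rw [hWdef, ← ENNReal.tsum_mul_left]
    refine ENNReal.tsum_le_tsum (fun x => ?_)
    rw [hh1fdef, ← ENNReal.ofReal_mul (by positivity)]
    apply ENNReal.ofReal_le_ofReal
    have hexle : ex x ≤ Real.exp (-(αs * ‖(x : EuclideanSpace ℝ (Fin d))‖)) := by
      rw [hexdef]
      apply Real.exp_le_exp.2
      nlinarith [norm_nonneg (x : EuclideanSpace ℝ (Fin d))]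
    calc nn x ^ 2 * ex x
        ≤ (a ^ 2 * (1 + ‖(x : EuclideanSpace ℝ (Fin d))‖))
            * Real.exp (-(αs * ‖(x : EuclideanSpace ℝ (Fin d))‖)) :=
          mul_le_mul (hnsq x) hexle (hex0 x).le (by positivity)
      _ = a ^ 2 * ((1 + ‖(x : EuclideanSpace ℝ (Fin d))‖)
            * Real.exp (-(αs * ‖(x : EuclideanSpace ℝ (Fin d))‖))) := by ring
  -- bound for the second sum
  have hsplit : ∀ t : ℝ, Real.exp (-β * t) = Real.exp (-(ε * t)) * Real.exp (-α * t) := by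
    intro t
    rw [← Real.exp_add]
    congr 1
    rw [hεdef]
    ring
  have hS2 : ∑' x : γ, h2f x ≤ ENNReal.ofReal (K2 * ε⁻¹) * ENNReal.ofReal Q := by
    rw [← hQof, ← ENNReal.tsum_mul_left]
    refine ENNReal.tsum_le_tsum (fun x => ?_)
    rw [hh2fdef, ← ENNReal.ofReal_mul (by positivity)]
    apply ENNReal.ofReal_le_ofReal
    set t : ℝ := ‖(x : EuclideanSpace ℝ (Fin d))‖ with htdef
    have ht : 0 ≤ t := norm_nonneg _
    have b1 : nn x ^ 2 * Real.exp (-(ε * t)) ≤ K2 * ε⁻¹ := by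
      calc nn x ^ 2 * Real.exp (-(ε * t))
          ≤ (a ^ 2 * (1 + t)) * Real.exp (-(ε * t)) :=
            mul_le_mul_of_nonneg_right (hnsq x) (Real.exp_nonneg _)
        _ = a ^ 2 * ((1 + t) * Real.exp (-(ε * t))) := by ring
        _ ≤ a ^ 2 * ((1 + αS) * ε⁻¹) :=
            mul_le_mul_of_nonneg_left (hMε t ht) (by positivity)
        _ = K2 * ε⁻¹ := by rw [hK2def]; ring
    calc nn x ^ 2 * (q x) ^ 2 * ex x
        = (nn x ^ 2 * Real.exp (-(ε * t))) * ((q x) ^ 2 * Real.exp (-α * t)) := by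
          rw [hexdef]
          show nn x ^ 2 * (q x) ^ 2 * Real.exp (-β * t) = _
          rw [hsplit t]
          ring
      _ ≤ (K2 * ε⁻¹) * ((q x) ^ 2 * Real.exp (-α * t)) :=
          mul_le_mul_of_nonneg_right b1 (by positivity)
  -- bound for the third sum
  set c : γ → γ → ℝ≥0∞ := fun x y =>
    if dist (x : EuclideanSpace ℝ (Fin d)) (y : EuclideanSpace ℝ (Fin d)) < r then
      ENNReal.ofReal (nn x * ex x) * ENNReal.ofReal ((q y) ^ 2)
    else 0 with hcdef
  have hh3 : ∀ x : γ, h3f x = ∑' y : γ, c x y := by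
    intro x
    have h := tsum_ite_eq_sum (γ := γ) (hLF := hLF) r (x : EuclideanSpace ℝ (Fin d))
      (fun z => ENNReal.ofReal (nn x * ex x) * ENNReal.ofReal ((q z) ^ 2))
    rw [hh3fdef]
    show ENNReal.ofReal (nn x * ex x)
        * ∑ y ∈ nbhd γ hLF r (x : EuclideanSpace ℝ (Fin d)), ENNReal.ofReal ((q y) ^ 2)
      = ∑' y : γ, c x y
    rw [Finset.mul_sum, ← h]
  have hS3 : ∑' x : γ, h3f x ≤ ENNReal.ofReal (K3 * ε⁻¹) * ENNReal.ofReal Q := by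
    have hyb : ∀ y : γ, ∑' x : γ, c x y
        ≤ ENNReal.ofReal (K3 * ε⁻¹)
          * ENNReal.ofReal ((q y) ^ 2 * Real.exp (-α * ‖(y : EuclideanSpace ℝ (Fin d))‖)) := by
      intro y
      set t : ℝ := ‖(y : EuclideanSpace ℝ (Fin d))‖ with htdef
      have ht : 0 ≤ t := norm_nonneg _
      set M : ℝ≥0∞ := ENNReal.ofReal (a * Real.sqrt (1 + r) * Real.sqrt (1 + t)
          * Real.exp (αS * r) * Real.exp (-β * t)) * ENNReal.ofReal ((q y) ^ 2) with hMdef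
      have hzero : ∀ x : γ, r ≤ dist (y : EuclideanSpace ℝ (Fin d))
          (x : EuclideanSpace ℝ (Fin d)) → c x y = 0 := by
        intro x hx
        rw [hcdef]
        refine if_neg (fun hlt => ?_)
        rw [dist_comm] at hlt
        linarith
      have hMy : ∀ x : γ, c x y ≤ M := by
        intro x
        simp only [hcdef]
        by_cases hxy : dist (x : EuclideanSpace ℝ (Fin d)) (y : EuclideanSpace ℝ (Fin d)) < r
        · rw [if_pos hxy, hMdef]
          refine mul_le_mul_left (ENNReal.ofReal_le_ofReal ?_) _
          have hxn : ‖(x : EuclideanSpace ℝ (Fin d))‖ ≤ t + r := by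
            have h1 := abs_norm_sub_norm_le (x : EuclideanSpace ℝ (Fin d))
              (y : EuclideanSpace ℝ (Fin d))
            rw [← dist_eq_norm] at h1
            have h2 := abs_le.1 h1
            rw [htdef]
            linarith [h2.2]
          have hyn : t - r ≤ ‖(x : EuclideanSpace ℝ (Fin d))‖ := by
            have h1 := abs_norm_sub_norm_le (y : EuclideanSpace ℝ (Fin d))
              (x : EuclideanSpace ℝ (Fin d))
            rw [← dist_eq_norm, dist_comm] at h1
            have h2 := abs_le.1 h1
            rw [htdef]
            linarith [h2.2]
          have hs1 : Real.sqrt (1 + ‖(x : EuclideanSpace ℝ (Fin d))‖)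
              ≤ Real.sqrt (1 + r) * Real.sqrt (1 + t) := by
            rw [← Real.sqrt_mul (by positivity)]
            apply Real.sqrt_le_sqrt
            nlinarith
          have he : ex x ≤ Real.exp (αS * r) * Real.exp (-β * t) := by
            rw [hexdef, ← Real.exp_add]
            apply Real.exp_le_exp.2
            nlinarith [mul_le_mul_of_nonneg_left
              (show t - ‖(x : EuclideanSpace ℝ (Fin d))‖ ≤ r by linarith) hβ0.le,
              mul_le_mul_of_nonneg_right hβS hr.le]
          calc nn x * ex x
              ≤ (a * Real.sqrt (1 + ‖(x : EuclideanSpace ℝ (Fin d))‖))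
                  * (Real.exp (αS * r) * Real.exp (-β * t)) :=
                mul_le_mul (hden _) he (hex0 x).le (by positivity)
            _ ≤ (a * (Real.sqrt (1 + r) * Real.sqrt (1 + t)))
                  * (Real.exp (αS * r) * Real.exp (-β * t)) := by
                refine mul_le_mul_of_nonneg_right ?_ (by positivity)
                exact mul_le_mul_of_nonneg_left hs1 ha.le
            _ = a * Real.sqrt (1 + r) * Real.sqrt (1 + t)
                  * Real.exp (αS * r) * Real.exp (-β * t) := by ring
        · rw [if_neg hxy]
          exact zero_le
      have hcard := tsum_le_card_mul (γ := γ) (hLF := hLF) r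
        (y : EuclideanSpace ℝ (Fin d)) (fun x => c x y) M hzero hMy
      have hreal : a * Real.sqrt (1 + t) * (a * Real.sqrt (1 + r) * Real.sqrt (1 + t)
          * Real.exp (αS * r) * Real.exp (-β * t))
          ≤ K3 * ε⁻¹ * Real.exp (-α * t) := by
        have hss' : Real.sqrt (1 + t) * Real.sqrt (1 + t) = 1 + t :=
          Real.mul_self_sqrt (by positivity)
        have heq : a * Real.sqrt (1 + t) * (a * Real.sqrt (1 + r) * Real.sqrt (1 + t)
            * Real.exp (αS * r) * Real.exp (-β * t))
            = (a ^ 2 * Real.sqrt (1 + r) * Real.exp (αS * r))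
              * ((1 + t) * Real.exp (-(ε * t))) * Real.exp (-α * t) := by
          calc a * Real.sqrt (1 + t) * (a * Real.sqrt (1 + r) * Real.sqrt (1 + t)
              * Real.exp (αS * r) * Real.exp (-β * t))
              = (a ^ 2 * Real.sqrt (1 + r) * Real.exp (αS * r))
                * ((Real.sqrt (1 + t) * Real.sqrt (1 + t))
                  * (Real.exp (-(ε * t)) * Real.exp (-α * t))) := by
                rw [hsplit t]; ring
            _ = (a ^ 2 * Real.sqrt (1 + r) * Real.exp (αS * r))
                * ((1 + t) * Real.exp (-(ε * t))) * Real.exp (-α * t) := by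
                rw [hss']; ring
        rw [heq]
        have hb := hMε t ht
        calc (a ^ 2 * Real.sqrt (1 + r) * Real.exp (αS * r))
            * ((1 + t) * Real.exp (-(ε * t))) * Real.exp (-α * t)
            ≤ (a ^ 2 * Real.sqrt (1 + r) * Real.exp (αS * r))
              * ((1 + αS) * ε⁻¹) * Real.exp (-α * t) := by
              refine mul_le_mul_of_nonneg_right ?_ (Real.exp_nonneg _)
              exact mul_le_mul_of_nonneg_left hb (by positivity)
          _ = K3 * ε⁻¹ * Real.exp (-α * t) := by rw [hK3def]; ring
      calc ∑' x : γ, c x y ≤ (npts γ hLF r (y : EuclideanSpace ℝ (Fin d)) : ℝ≥0∞) * M :=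
            hcard
        _ ≤ ENNReal.ofReal (a * Real.sqrt (1 + t)) * M := by
            refine mul_le_mul_left ?_ _
            rw [← ENNReal.ofReal_natCast]
            exact ENNReal.ofReal_le_ofReal (hden _)
        _ = ENNReal.ofReal (a * Real.sqrt (1 + t) * (a * Real.sqrt (1 + r)
              * Real.sqrt (1 + t) * Real.exp (αS * r) * Real.exp (-β * t)))
            * ENNReal.ofReal ((q y) ^ 2) := by
            rw [hMdef, ← mul_assoc, ← ENNReal.ofReal_mul (by positivity)]
        _ ≤ ENNReal.ofReal (K3 * ε⁻¹ * Real.exp (-α * t)) * ENNReal.ofReal ((q y) ^ 2) :=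
            mul_le_mul_left (ENNReal.ofReal_le_ofReal hreal) _
        _ = ENNReal.ofReal (K3 * ε⁻¹)
            * ENNReal.ofReal ((q y) ^ 2 * Real.exp (-α * t)) := by
            rw [ENNReal.ofReal_mul (by positivity), ENNReal.ofReal_mul (sq_nonneg _)]
            ring
    calc ∑' x : γ, h3f x = ∑' x : γ, ∑' y : γ, c x y := tsum_congr hh3
      _ = ∑' y : γ, ∑' x : γ, c x y := ENNReal.tsum_comm
      _ ≤ ∑' y : γ, ENNReal.ofReal (K3 * ε⁻¹)
          * ENNReal.ofReal ((q y) ^ 2 * Real.exp (-α * ‖(y : EuclideanSpace ℝ (Fin d))‖)) :=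
          ENNReal.tsum_le_tsum hyb
      _ = ENNReal.ofReal (K3 * ε⁻¹) * ENNReal.ofReal Q := by
          rw [ENNReal.tsum_mul_left, hQof]
  -- combine everything
  have hsqQ : (0:ℝ) ≤ Real.sqrt Q := Real.sqrt_nonneg Q
  have h1Q : (1:ℝ) ≤ (1 + Real.sqrt Q) ^ 2 := by nlinarith
  have hQle : Q ≤ (1 + Real.sqrt Q) ^ 2 := by nlinarith [Real.sq_sqrt hQ0]
  have hb1 : ENNReal.ofReal (a ^ 2) * W
      ≤ ENNReal.ofReal (K1 * ε⁻¹ * (1 + Real.sqrt Q) ^ 2) := by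
    rw [← hWof, ← ENNReal.ofReal_mul (by positivity)]
    apply ENNReal.ofReal_le_ofReal
    have h3 : (1:ℝ) ≤ αS * ε⁻¹ * (1 + Real.sqrt Q) ^ 2 := by
      calc (1:ℝ) = 1 * 1 := by ring
        _ ≤ (αS * ε⁻¹) * (1 + Real.sqrt Q) ^ 2 :=
            mul_le_mul hone_le h1Q zero_le_one (le_trans zero_le_one hone_le)
    have h4 : (0:ℝ) ≤ a ^ 2 * Wr := by positivity
    calc a ^ 2 * Wr = (a ^ 2 * Wr) * 1 := by ring
      _ ≤ (a ^ 2 * Wr) * (αS * ε⁻¹ * (1 + Real.sqrt Q) ^ 2) :=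
          mul_le_mul_of_nonneg_left h3 h4
      _ = K1 * ε⁻¹ * (1 + Real.sqrt Q) ^ 2 := by rw [hK1def]; ring
  have hb2 : ENNReal.ofReal (K2 * ε⁻¹) * ENNReal.ofReal Q
      ≤ ENNReal.ofReal (K2 * ε⁻¹ * (1 + Real.sqrt Q) ^ 2) := by
    rw [← ENNReal.ofReal_mul (by positivity)]
    apply ENNReal.ofReal_le_ofReal
    exact mul_le_mul_of_nonneg_left hQle (by positivity)
  have hb3 : ENNReal.ofReal (K3 * ε⁻¹) * ENNReal.ofReal Q
      ≤ ENNReal.ofReal (K3 * ε⁻¹ * (1 + Real.sqrt Q) ^ 2) := by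
    rw [← ENNReal.ofReal_mul (by positivity)]
    apply ENNReal.ofReal_le_ofReal
    exact mul_le_mul_of_nonneg_left hQle (by positivity)
  have hB1 : (0:ℝ) ≤ K1 * ε⁻¹ * (1 + Real.sqrt Q) ^ 2 := by positivity
  have hB2 : (0:ℝ) ≤ K2 * ε⁻¹ * (1 + Real.sqrt Q) ^ 2 := by positivity
  have hB3 : (0:ℝ) ≤ K3 * ε⁻¹ * (1 + Real.sqrt Q) ^ 2 := by positivity
  have htotal : ∑' x : γ, ENNReal.ofReal (f x)
      ≤ ENNReal.ofReal (L ^ 2 * ε⁻¹ * (1 + Real.sqrt Q) ^ 2) := by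
    refine le_trans hsum_total ?_
    calc ENNReal.ofReal (3 * C ^ 2)
        * ((∑' x : γ, h1f x) + (∑' x : γ, h2f x) + (∑' x : γ, h3f x))
        ≤ ENNReal.ofReal (3 * C ^ 2)
          * (ENNReal.ofReal (K1 * ε⁻¹ * (1 + Real.sqrt Q) ^ 2)
            + ENNReal.ofReal (K2 * ε⁻¹ * (1 + Real.sqrt Q) ^ 2)
            + ENNReal.ofReal (K3 * ε⁻¹ * (1 + Real.sqrt Q) ^ 2)) := by
          refine mul_le_mul_right ?_ _
          exact add_le_add (add_le_add (le_trans hS1 hb1) (le_trans hS2 hb2))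
            (le_trans hS3 hb3)
      _ = ENNReal.ofReal (L ^ 2 * ε⁻¹ * (1 + Real.sqrt Q) ^ 2) := by
          rw [← ENNReal.ofReal_add hB1 hB2, ← ENNReal.ofReal_add (by positivity) hB3,
            ← ENNReal.ofReal_mul (by positivity), hLsq]
          congr 1
          ring
  have hRHS0 : (0:ℝ) ≤ L ^ 2 * ε⁻¹ * (1 + Real.sqrt Q) ^ 2 := by positivity
  have hfin : (∑' x : γ, ENNReal.ofReal (f x)) ≠ ⊤ :=
    (lt_of_le_of_lt htotal ENNReal.ofReal_lt_top).ne
  have hsummable : Summable f := by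
    have h := ENNReal.summable_toReal hfin
    exact h.congr (fun x => ENNReal.toReal_ofReal (hf_nonneg x))
  refine ⟨hsummable, ?_⟩
  have hofsum : ENNReal.ofReal (∑' x : γ, f x) = ∑' x : γ, ENNReal.ofReal (f x) :=
    ENNReal.ofReal_tsum_of_nonneg hf_nonneg hsummable
  have hle : ENNReal.ofReal (∑' x : γ, f x)
      ≤ ENNReal.ofReal (L ^ 2 * ε⁻¹ * (1 + Real.sqrt Q) ^ 2) := by
    rw [hofsum]
    exact htotal
  exact (ENNReal.ofReal_le_ofReal_iff hRHS0).1 hle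

end
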